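/- Let a : ℝ → ℝ be continuous, h ∈ ℝ, and let u, v : ℝ → ℝ be twice differentiable functions satisfying u''(t) + a(t)·u(t) = 0 and v''(t) + a(t)·v(t) = 0 for all t. Let W = u(0)·v'(0) − u'(0)·v(0) and suppose W ≠ 0. Let A, B, C be real constants with (A·C − B²)·W² = h², and suppose w(t) := A·u(t)² + 2B·u(t)·v(t) + C·v(t)² > 0 for all t. Then x(t) := √(w(t)) satisfies x''(t) + a(t)·x(t) = h²/x(t)³ for all t. -/

import Mathlib

/-- Pinney's solution: if `u, v` solve `z'' + a(t) z = 0` with nonzero Wronskian `W`,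
`(AC − B²)W² = h²`, and `w = Au² + 2Buv + Cv² > 0`, then `x = √w` solves the
Ermakov–Pinney equation `x'' + a(t) x = h²/x³`. -/
theorem pinney_solution_time_dependent
    (a : ℝ → ℝ) (ha : Continuous a) (h : ℝ) (u v : ℝ → ℝ)
    (hu : Differentiable ℝ u) (hu' : Differentiable ℝ (deriv u))
    (hv : Differentiable ℝ v) (hv' : Differentiable ℝ (deriv v))
    (hueq : ∀ t, deriv (deriv u) t + a t * u t = 0)
    (hveq : ∀ t, deriv (deriv v) t + a t * v t = 0)
    (W : ℝ) (hW : W = u 0 * deriv v 0 - deriv u 0 * v 0) (hWne : W ≠ 0)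
    (A B C : ℝ) (hABC : (A * C - B ^ 2) * W ^ 2 = h ^ 2)
    (hwpos : ∀ t, A * u t ^ 2 + 2 * B * u t * v t + C * v t ^ 2 > 0) :
    ∀ t, deriv (deriv fun s => Real.sqrt (A * u s ^ 2 + 2 * B * u s * v s + C * v s ^ 2)) t
          + a t * Real.sqrt (A * u t ^ 2 + 2 * B * u t * v t + C * v t ^ 2)
        = h ^ 2 / (Real.sqrt (A * u t ^ 2 + 2 * B * u t * v t + C * v t ^ 2)) ^ 3 := by
  set w : ℝ → ℝ := fun s => A * u s ^ 2 + 2 * B * u s * v s + C * v s ^ 2 with hwdef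
  set d : ℝ → ℝ := fun s => A * u s * deriv u s + B * (deriv u s * v s + u s * deriv v s)
      + C * v s * deriv v s with hddef
  -- Wronskian is constant
  have hp : ∀ t, u t * deriv v t - deriv u t * v t = W := by
    have hpd : Differentiable ℝ (fun s => u s * deriv v s - deriv u s * v s) :=
      (hu.mul hv').sub (hu'.mul hv)
    have hz : ∀ s, deriv (fun s => u s * deriv v s - deriv u s * v s) s = 0 := by
      intro s
      have h1 : HasDerivAt (fun s => u s * deriv v s - deriv u s * v s)
          (deriv u s * deriv v s + u s * deriv (deriv v) s
            - (deriv (deriv u) s * v s + deriv u s * deriv v s)) s :=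
        ((hu.differentiableAt.hasDerivAt.mul hv'.differentiableAt.hasDerivAt).sub
          (hu'.differentiableAt.hasDerivAt.mul hv.differentiableAt.hasDerivAt))
      rw [h1.deriv]
      have e1 : deriv (deriv u) s = - (a s * u s) := by linarith [hueq s]
      have e2 : deriv (deriv v) s = - (a s * v s) := by linarith [hveq s]
      rw [e1, e2]; ring
    intro t
    have := is_const_of_deriv_eq_zero hpd hz t 0
    rw [this, hW]
  -- derivative of w
  have hwD : ∀ s, HasDerivAt w (2 * d s) s := by
    intro s
    have hus := hu.differentiableAt.hasDerivAt (x := s)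
    have hvs := hv.differentiableAt.hasDerivAt (x := s)
    have t1 := (hus.pow 2).const_mul A
    have t2 := (hus.const_mul (2 * B)).mul hvs
    have t3 := (hvs.pow 2).const_mul C
    have H := (t1.add t2).add t3
    refine H.congr_deriv ?_
    simp only [hddef]
    push_cast
    ring
  -- derivative of sqrt w
  have hxD : ∀ s, HasDerivAt (fun r => Real.sqrt (w r)) (d s / Real.sqrt (w s)) s := by
    intro s
    have hne : w s ≠ 0 := (hwpos s).ne'
    have hs : Real.sqrt (w s) ≠ 0 := (Real.sqrt_pos.mpr (hwpos s)).ne'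
    refine ((hwD s).sqrt hne).congr_deriv ?_
    field_simp
  intro t
  have hderiv1 : deriv (fun s => Real.sqrt (w s)) = fun s => d s / Real.sqrt (w s) :=
    funext fun s => (hxD s).deriv
  -- second derivative of sqrt w : derivative of d / sqrt w
  have hdD : HasDerivAt d
      ((A * deriv u t ^ 2 + 2 * B * deriv u t * deriv v t + C * deriv v t ^ 2)
        - a t * w t) t := by
    have hus := hu.differentiableAt.hasDerivAt (x := t)
    have hvs := hv.differentiableAt.hasDerivAt (x := t)
    have hus' := hu'.differentiableAt.hasDerivAt (x := t)
    have hvs' := hv'.differentiableAt.hasDerivAt (x := t)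
    have t1 := (hus.const_mul A).mul hus'
    have t2 := ((hus'.mul hvs).add (hus.mul hvs')).const_mul B
    have t3 := (hvs.const_mul C).mul hvs'
    have H := (t1.add t2).add t3
    have Hd : HasDerivAt d (A * deriv u t * deriv u t + A * u t * deriv (deriv u) t
        + B * ((deriv (deriv u) t * v t + deriv u t * deriv v t)
          + (deriv u t * deriv v t + u t * deriv (deriv v) t))
        + (C * deriv v t * deriv v t + C * v t * deriv (deriv v) t)) t := by
      refine H.congr_deriv ?_
      ring
    refine Hd.congr_deriv ?_
    have e1 : deriv (deriv u) t = - (a t * u t) := by linarith [hueq t]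
    have e2 : deriv (deriv v) t = - (a t * v t) := by linarith [hveq t]
    rw [e1, e2]; simp only [hwdef]; ring
  set q : ℝ := A * deriv u t ^ 2 + 2 * B * deriv u t * deriv v t + C * deriv v t ^ 2 with hq
  have hsne : Real.sqrt (w t) ≠ 0 := (Real.sqrt_pos.mpr (hwpos t)).ne'
  have hx2D : HasDerivAt (fun s => d s / Real.sqrt (w s))
      (((q - a t * w t) * Real.sqrt (w t) - d t * (d t / Real.sqrt (w t)))
        / Real.sqrt (w t) ^ 2) t :=
    hdD.div (hxD t) hsne
  rw [hderiv1, hx2D.deriv]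
  -- final algebra
  have hsq : Real.sqrt (w t) ^ 2 = w t := Real.sq_sqrt (hwpos t).le
  have key : q * w t - d t ^ 2 = h ^ 2 := by
    have hpt := hp t
    have e : q * w t - d t ^ 2 = (A * C - B ^ 2) * (u t * deriv v t - deriv u t * v t) ^ 2 := by
      simp only [hq, hwdef, hddef]; ring
    rw [e, hpt, hABC]
  set s : ℝ := Real.sqrt (w t) with hsdef
  rw [← hsq] at key ⊢
  field_simp
  linear_combination key
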